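/- arXiv:1807.04497 — 3 statements merged into one kernel-verified Lean document; each statement's English description precedes it below -/
import Mathlib

section
/- Let n ≥ 3. Up to isomorphism of extensions, there is exactly one central extension 1 → C₂ → P → D_{2^{n-1}} → 1 such that the middle group P is isomorphic to the generalised quaternion group Q_{2^n} of order 2^n. -/
/-- A central extension `1 → C₂ → P → D_{2^{n-1}} → 1` of the dihedral group of order
`2^{n-1}` (realised as `DihedralGroup (2^(n-2))`) by the cyclic group `C₂` of order `2`. -/
structure CentralExtByC2OfDihedral (n : ℕ) where
  P : Type
  [grp : Group P]
  ι : Multiplicative (ZMod 2) →* P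
  π : P →* DihedralGroup (2 ^ (n - 2))
  ι_injective : Function.Injective ι
  π_surjective : Function.Surjective π
  central : ι.range ≤ Subgroup.center P
  exact : π.ker = ι.range

attribute [instance] CentralExtByC2OfDihedral.grp

/-- Isomorphism of central extensions: an isomorphism of the middle groups commuting with the
inclusion of `C₂` and the projection onto the dihedral group. -/
def CentralExtByC2OfDihedral.IsIsoTo {n : ℕ}
    (E E' : CentralExtByC2OfDihedral n) : Prop :=
  ∃ e : E.P ≃* E'.P, (∀ z, e (E.ι z) = E'.ι z) ∧ (∀ x, E'.π (e x) = E.π x)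



namespace UCE
open QuaternionGroup DihedralGroup

/-- Reduction `ZMod (2*m) → ZMod m`. -/
def dcast (m : ℕ) : ZMod (2 * m) →+* ZMod m := ZMod.castHom (dvd_mul_left m 2) _

/-- The canonical projection `Q_{4m} → D_{2m}`. -/
def pi0 (m : ℕ) : QuaternionGroup m →* DihedralGroup m where
  toFun q := match q with
    | .a i => r (dcast m i)
    | .xa i => sr (dcast m i)
  map_one' := by
    show r (dcast m 0) = 1
    rw [map_zero]; rfl
  map_mul' := by
    rintro (i | i) (j | j)
    · show r (dcast m (i + j)) = r (dcast m i) * r (dcast m j)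
      rw [r_mul_r, map_add]
    · show sr (dcast m (j - i)) = r (dcast m i) * sr (dcast m j)
      rw [r_mul_sr, map_sub]
    · show sr (dcast m (i + j)) = sr (dcast m i) * r (dcast m j)
      rw [sr_mul_r, map_add]
    · show r (dcast m ((m : ZMod (2 * m)) + j - i)) = sr (dcast m i) * sr (dcast m j)
      rw [sr_mul_sr, map_sub, map_add, map_natCast, ZMod.natCast_self, zero_add]

/-- The canonical inclusion `C₂ → Q_{4m}` hitting the central element `a m`. -/
def iota0 (m : ℕ) : Multiplicative (ZMod 2) →* QuaternionGroup m where
  toFun z := if Multiplicative.toAdd z = 0 then 1 else a (m : ZMod (2 * m))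
  map_one' := by simp
  map_mul' := by
    have h2 : ∀ u : ZMod 2, u = 0 ∨ u = 1 := by decide
    have hmm : ((m : ZMod (2 * m)) + m) = 0 := by
      have : ((2 * m : ℕ) : ZMod (2 * m)) = 0 := ZMod.natCast_self _
      push_cast at this
      linear_combination this
    intro z w
    rcases h2 (Multiplicative.toAdd z) with hz | hz <;>
      rcases h2 (Multiplicative.toAdd w) with hw | hw <;>
        simp [toAdd_mul, hz, hw, QuaternionGroup.one_def, hmm, (by decide : (1 + 1 : ZMod 2) = 0), -QuaternionGroup.a_zero]

lemma neg_m (m : ℕ) : -(m : ZMod (2 * m)) = (m : ZMod (2 * m)) := by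
  have : ((2 * m : ℕ) : ZMod (2 * m)) = 0 := ZMod.natCast_self _
  push_cast at this
  linear_combination -this

lemma natCast_m_ne_zero {m : ℕ} (hm : 0 < m) : ((m : ZMod (2 * m))) ≠ 0 := by
  rw [Ne, ZMod.natCast_eq_zero_iff]
  intro h
  have := Nat.le_of_dvd hm h
  omega

/-- The unique involution of the generalised quaternion group. -/
lemma sq_eq_one (m : ℕ) (hm : 0 < m) (q : QuaternionGroup m) (h : q * q = 1) :
    q = 1 ∨ q = a (m : ZMod (2 * m)) := by
  haveI : NeZero (2 * m) := ⟨by omega⟩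
  rcases q with i | i
  · rw [a_mul_a, QuaternionGroup.one_def] at h
    have hij : i + i = 0 := by injection h
    have hv : (i.val + i.val) % (2 * m) = 0 := by
      rw [← ZMod.val_add, hij, ZMod.val_zero]
    have hlt : i.val < 2 * m := ZMod.val_lt i
    have : i.val = 0 ∨ i.val = m := by
      rcases Nat.dvd_of_mod_eq_zero hv with ⟨c, hc⟩
      have hc2 : c < 2 := by
        by_contra hcc
        push_neg at hcc
        have : 2 * m * 2 ≤ 2 * m * c := Nat.mul_le_mul_left _ hcc
        omega
      interval_cases c <;> omega
    rcases this with h0 | h0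
    · left
      have := ZMod.natCast_rightInverse (n := 2 * m) i
      rw [← this, h0, Nat.cast_zero, QuaternionGroup.one_def]
    · right
      have := ZMod.natCast_rightInverse (n := 2 * m) i
      rw [← this, h0]
  · exfalso
    rw [xa_mul_xa, add_sub_cancel_right, QuaternionGroup.one_def] at h
    have : (m : ZMod (2 * m)) = 0 := by injection h
    exact natCast_m_ne_zero hm this

lemma iota0_one (m : ℕ) : iota0 m 1 = 1 := map_one _

lemma iota0_ofAdd_one (m : ℕ) : iota0 m (Multiplicative.ofAdd 1) = a (m : ZMod (2 * m)) := by
  simp only [iota0, MonoidHom.coe_mk, OneHom.coe_mk, toAdd_ofAdd]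
  rw [if_neg (by decide)]

lemma iota0_injective (m : ℕ) (hm : 0 < m) : Function.Injective (iota0 m) := by
  have h2 : ∀ u : Multiplicative (ZMod 2), u = 1 ∨ u = Multiplicative.ofAdd 1 := by decide
  intro z w h
  rcases h2 z with hz | hz <;> rcases h2 w with hw | hw <;> subst hz <;> subst hw <;> try rfl
  · exfalso
    rw [iota0_one, iota0_ofAdd_one, QuaternionGroup.one_def] at h
    have : (0 : ZMod (2 * m)) = (m : ZMod (2 * m)) := by injection h
    exact natCast_m_ne_zero hm this.symm
  · exfalso
    rw [iota0_one, iota0_ofAdd_one, QuaternionGroup.one_def] at h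
    have : (m : ZMod (2 * m)) = (0 : ZMod (2 * m)) := by injection h
    exact natCast_m_ne_zero hm this

lemma dcast_natCast_val {m : ℕ} [NeZero m] (j : ZMod m) :
    dcast m ((j.val : ZMod (2 * m))) = j := by
  rw [map_natCast, ZMod.natCast_rightInverse j]

lemma pi0_surjective (m : ℕ) (hm : 0 < m) : Function.Surjective (pi0 m) := by
  haveI : NeZero m := ⟨hm.ne'⟩
  rintro (j | j)
  · exact ⟨.a ((j.val : ZMod (2 * m))), by show r _ = r j; rw [dcast_natCast_val]⟩
  · exact ⟨.xa ((j.val : ZMod (2 * m))), by show sr _ = sr j; rw [dcast_natCast_val]⟩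

lemma iota0_central (m : ℕ) : (iota0 m).range ≤ Subgroup.center (QuaternionGroup m) := by
  rintro p ⟨z, rfl⟩
  rw [Subgroup.mem_center_iff]
  have h2 : ∀ u : Multiplicative (ZMod 2), u = 1 ∨ u = Multiplicative.ofAdd 1 := by decide
  rcases h2 z with hz | hz <;> subst hz
  · simp
  · rw [iota0_ofAdd_one]
    rintro (j | j)
    · rw [a_mul_a, a_mul_a, add_comm]
    · rw [xa_mul_a, a_mul_xa, sub_eq_add_neg, neg_m]

lemma pi0_ker (m : ℕ) (hm : 0 < m) : (pi0 m).ker = (iota0 m).range := by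
  haveI : NeZero m := ⟨hm.ne'⟩
  haveI : NeZero (2 * m) := ⟨by omega⟩
  ext q
  rw [MonoidHom.mem_ker]
  constructor
  · intro h
    rcases q with i | i
    · have h' : r (dcast m i) = r 0 := h
      have hd : dcast m i = 0 := by injection h'
      rw [dcast, ZMod.castHom_apply, ← ZMod.natCast_val, ZMod.natCast_eq_zero_iff] at hd
      have hlt : i.val < 2 * m := ZMod.val_lt i
      have : i.val = 0 ∨ i.val = m := by
        rcases hd with ⟨c, hc⟩
        have hc2 : c < 2 := by
          by_contra hcc
          push_neg at hcc
          have : m * 2 ≤ m * c := Nat.mul_le_mul_left m hcc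
          omega
        interval_cases c <;> omega
      rcases this with h0 | h0
      · refine ⟨1, ?_⟩
        rw [iota0_one]
        have := ZMod.natCast_rightInverse (n := 2 * m) i
        rw [← this, h0, Nat.cast_zero, QuaternionGroup.one_def]
      · refine ⟨Multiplicative.ofAdd 1, ?_⟩
        rw [iota0_ofAdd_one]
        have := ZMod.natCast_rightInverse (n := 2 * m) i
        rw [← this, h0]
    · exfalso
      have h' : sr (dcast m i) = r 0 := h
      injection h'
  · rintro ⟨z, rfl⟩
    have h2 : ∀ u : Multiplicative (ZMod 2), u = 1 ∨ u = Multiplicative.ofAdd 1 := by decide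
    rcases h2 z with hz | hz <;> subst hz
    · simp
    · rw [iota0_ofAdd_one]
      show r (dcast m (m : ZMod (2 * m))) = 1
      rw [map_natCast, ZMod.natCast_self, DihedralGroup.one_def]

lemma key (m k : ℕ) (hmk : m = 2 * k) (hk : 0 < k)
    {P : Type} [Group P] (ι : Multiplicative (ZMod 2) →* P)
    (π : P →* DihedralGroup m)
    (hι : Function.Injective ι) (hπ : Function.Surjective π)
    (hc : ι.range ≤ Subgroup.center P) (he : π.ker = ι.range)
    (φ : P ≃* QuaternionGroup m) :
    ∃ e : P ≃* QuaternionGroup m,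
      (∀ z, e (ι z) = iota0 m z) ∧ (∀ x, pi0 m (e x) = π x) := by
  have hm : 0 < m := by omega
  haveI : NeZero m := ⟨hm.ne'⟩
  haveI : NeZero (2 * m) := ⟨by omega⟩
  set zelt : P := ι (Multiplicative.ofAdd 1) with hzelt
  have hz2 : zelt * zelt = 1 := by
    rw [← map_mul, (by decide : Multiplicative.ofAdd (1 : ZMod 2) * Multiplicative.ofAdd 1 = 1),
      map_one]
  have hz1 : zelt ≠ 1 := by
    intro h
    have h2 : ι (Multiplicative.ofAdd (1 : ZMod 2)) = ι 1 := by
      rw [map_one ι]; exact h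
    exact absurd (hι h2) (by decide)
  have hzc : ∀ p : P, p * zelt = zelt * p :=
    Subgroup.mem_center_iff.mp (hc ⟨Multiplicative.ofAdd 1, rfl⟩)
  -- kernel description
  have hker : ∀ p : P, π p = 1 ↔ p = 1 ∨ p = zelt := by
    intro p
    constructor
    · intro h
      have : p ∈ (ι).range := by rw [← he]; exact h
      obtain ⟨z, rfl⟩ := this
      rcases (by decide : ∀ u : Multiplicative (ZMod 2), u = 1 ∨ u = Multiplicative.ofAdd 1) z
        with hz | hz <;> subst hz
      · left; exact map_one ι
      · right; rfl
    · rintro (rfl | rfl)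
      · exact map_one π
      · have : zelt ∈ π.ker := by rw [he]; exact ⟨Multiplicative.ofAdd 1, rfl⟩
        exact this
  -- unique involution in P
  have hφz : φ zelt = a (m : ZMod (2 * m)) := by
    have h1 : φ zelt * φ zelt = 1 := by rw [← map_mul, hz2, map_one]
    rcases sq_eq_one m hm _ h1 with h | h
    · exact absurd (φ.injective (h.trans (map_one φ).symm)) hz1
    · exact h
  have hinv : ∀ p : P, p * p = 1 → p = 1 ∨ p = zelt := by
    intro p hp
    have h1 : φ p * φ p = 1 := by rw [← map_mul, hp, map_one]
    rcases sq_eq_one m hm _ h1 with h | h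
    · left; exact φ.injective (h.trans (map_one φ).symm)
    · right; exact φ.injective (h.trans hφz.symm)
  obtain ⟨x, hx⟩ := hπ (r 1)
  obtain ⟨y, hy⟩ := hπ (sr 0)
  have hπz : π zelt = 1 := (hker zelt).2 (Or.inr rfl)
  have hsr_ne_one : ∀ j : ZMod m, sr j ≠ (1 : DihedralGroup m) := by
    intro j h
    rw [DihedralGroup.one_def] at h
    injection h
  -- y * y = zelt
  have hyy : y * y = zelt := by
    have h1 : π (y * y) = 1 := by
      rw [map_mul, hy, sr_mul_sr, sub_self, DihedralGroup.one_def]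
    rcases (hker _).1 h1 with h | h
    · exfalso
      rcases hinv y h with rfl | rfl
      · rw [map_one] at hy; exact hsr_ne_one 0 hy.symm
      · rw [hπz] at hy; exact hsr_ne_one 0 hy.symm
    · exact h
  -- x ^ m = zelt
  have hxm : x ^ m = zelt := by
    have h1 : π (x ^ m) = 1 := by
      rw [map_pow, hx, r_one_pow, ZMod.natCast_self, DihedralGroup.one_def]
    rcases (hker _).1 h1 with h | h
    · exfalso
      have hw : (x ^ k) * (x ^ k) = 1 := by rw [← pow_add, (by omega : k + k = m), h]
      have hπw : π (x ^ k) = r (k : ZMod m) := by rw [map_pow, hx, r_one_pow]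
      have hne : ((k : ZMod m)) ≠ 0 := by
        rw [Ne, ZMod.natCast_eq_zero_iff]
        intro hd
        have := Nat.le_of_dvd hk hd
        omega
      rcases hinv _ hw with h2 | h2
      · rw [h2, map_one, DihedralGroup.one_def] at hπw
        exact hne (by injection hπw with hh; exact hh.symm)
      · rw [h2, hπz, DihedralGroup.one_def] at hπw
        exact hne (by injection hπw with hh; exact hh.symm)
    · exact h
  have hx2m : x ^ (2 * m) = 1 := by rw [two_mul, pow_add, hxm, hz2]
  -- x * y = y * x⁻¹
  have hxyc : x * y = y * x⁻¹ := by
    have h1 : π (y * x * y⁻¹ * x) = 1 := by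
      have hyinv : π y⁻¹ = sr 0 := by
        rw [map_inv, hy, inv_eq_of_mul_eq_one_right (sr_mul_self 0)]
      rw [map_mul, map_mul, map_mul, hx, hy, hyinv, sr_mul_r, sr_mul_sr, r_mul_r]
      convert DihedralGroup.one_def.symm using 2
      ring
    rcases (hker _).1 h1 with h | h
    · have h2 : y * x * y⁻¹ = x⁻¹ := eq_inv_of_mul_eq_one_left h
      have h3 : y * x = x⁻¹ * y := by rw [← h2]; group
      calc x * y = x * (y * x) * x⁻¹ := by group
      _ = x * (x⁻¹ * y) * x⁻¹ := by rw [h3]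
      _ = y * x⁻¹ := by group
    · exfalso
      have h2 : (x * y) * (x * y) = 1 := by
        have h3 : y * x * y⁻¹ = zelt * x⁻¹ := by
          rw [← h]; group
        calc (x * y) * (x * y) = x * (y * x * y⁻¹) * (y * y) := by group
        _ = x * (zelt * x⁻¹) * zelt := by rw [h3, hyy]
        _ = (x * zelt) * x⁻¹ * zelt := by group
        _ = (zelt * x) * x⁻¹ * zelt := by rw [hzc x]
        _ = zelt * zelt := by group
        _ = 1 := hz2
      have hπxy : π (x * y) = sr (-1) := by
        rw [map_mul, hx, hy, r_mul_sr, zero_sub]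
      rcases hinv _ h2 with h3 | h3
      · rw [h3, map_one] at hπxy; exact hsr_ne_one _ hπxy.symm
      · rw [h3, hπz] at hπxy; exact hsr_ne_one _ hπxy.symm
  -- powers indexed by ZMod (2*m)
  have horder : orderOf x ∣ 2 * m := orderOf_dvd_of_pow_eq_one hx2m
  set X : ZMod (2 * m) → P := fun i => x ^ i.val with hX
  have Xnat : ∀ j : ℕ, X (j : ZMod (2 * m)) = x ^ j := by
    intro j
    show x ^ (ZMod.val _) = x ^ j
    rw [ZMod.val_natCast]
    exact (pow_eq_pow_iff_modEq).mpr ((Nat.mod_modEq j (2 * m)).of_dvd horder)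
  have Xadd : ∀ i j : ZMod (2 * m), X (i + j) = X i * X j := by
    intro i j
    show x ^ _ = x ^ _ * x ^ _
    rw [ZMod.val_add, ← pow_add]
    exact (pow_eq_pow_iff_modEq).mpr ((Nat.mod_modEq _ (2 * m)).of_dvd horder)
  have X0 : X 0 = 1 := by rw [(by norm_num : (0 : ZMod (2*m)) = ((0:ℕ) : ZMod (2*m))), Xnat, pow_zero]
  have Xinv : ∀ i : ZMod (2 * m), X (-i) = (X i)⁻¹ := by
    intro i
    have : X (-i) * X i = 1 := by rw [← Xadd, neg_add_cancel, X0]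
    exact eq_inv_of_mul_eq_one_left this
  have Xm : X ((m : ℕ) : ZMod (2 * m)) = zelt := by rw [Xnat, hxm]
  have hxny : ∀ j : ℕ, x ^ j * y = y * (x ^ j)⁻¹ := by
    intro j
    induction j with
    | zero => group
    | succ nn ih =>
      calc x ^ (nn + 1) * y = x ^ nn * (x * y) := by group
      _ = x ^ nn * y * x⁻¹ := by rw [hxyc]; group
      _ = y * (x ^ nn)⁻¹ * x⁻¹ := by rw [ih]
      _ = y * (x ^ (nn+1))⁻¹ := by group
  have XY : ∀ i : ZMod (2 * m), X i * y = y * X (-i) := by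
    intro i
    rw [Xinv]
    exact hxny i.val
  have piX : ∀ i : ZMod (2 * m), π (X i) = r (dcast m i) := by
    intro i
    show π (x ^ i.val) = _
    rw [map_pow, hx, r_one_pow]
    congr 1
    rw [dcast, ZMod.castHom_apply, ZMod.natCast_val]
  -- the homomorphism f : Q → P
  let f0 : QuaternionGroup m → P := fun q => match q with
    | .a i => X i
    | .xa i => y * X i
  have fmul : ∀ q q' : QuaternionGroup m, f0 (q * q') = f0 q * f0 q' := by
    rintro (i | i) (j | j)
    · show X (i + j) = X i * X j
      exact Xadd i j
    · show y * X (j - i) = X i * (y * X j)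
      rw [← mul_assoc, XY, mul_assoc, ← Xadd, neg_add_eq_sub]
    · show y * X (i + j) = (y * X i) * X j
      rw [Xadd, mul_assoc]
    · show X ((m : ZMod (2*m)) + j - i) = (y * X i) * (y * X j)
      symm
      calc (y * X i) * (y * X j) = y * (X i * y) * X j := by group
      _ = y * (y * X (-i)) * X j := by rw [XY]
      _ = (y * y) * (X (-i) * X j) := by group
      _ = X ((m : ℕ) : ZMod (2*m)) * X (-i + j) := by rw [hyy, ← Xm, ← Xadd]
      _ = X (((m : ℕ) : ZMod (2*m)) + (-i + j)) := by rw [← Xadd]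
      _ = X ((m : ZMod (2*m)) + j - i) := by congr 1; ring
  let f : QuaternionGroup m →* P :=
    { toFun := f0, map_one' := X0, map_mul' := fmul }
  have f_a : ∀ i, f (.a i) = X i := fun _ => rfl
  have f_xa : ∀ i, f (.xa i) = y * X i := fun _ => rfl
  have fι : ∀ z, f (iota0 m z) = ι z := by
    intro z
    rcases (by decide : ∀ u : Multiplicative (ZMod 2), u = 1 ∨ u = Multiplicative.ofAdd 1) z
      with hz | hz <;> subst hz
    · rw [iota0_one, map_one, map_one]
    · rw [iota0_ofAdd_one, f_a, Xm]
  have fπ : ∀ q, π (f q) = pi0 m q := by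
    rintro (i | i)
    · rw [f_a, piX]; rfl
    · rw [f_xa, map_mul, hy, piX]
      show sr 0 * r (dcast m i) = sr (dcast m i)
      rw [sr_mul_r, zero_add]
  have fsurj : Function.Surjective f := by
    intro p
    have hker2 : ∀ q : QuaternionGroup m, π (p * (f q)⁻¹) = 1 → ∃ q', f q' = p := by
      intro q hq
      rcases (hker _).1 hq with h | h
      · exact ⟨q, by rw [mul_inv_eq_one] at h; exact h.symm⟩
      · refine ⟨.a ((m : ℕ) : ZMod (2*m)) * q, ?_⟩
        rw [map_mul, f_a, Xm]
        rw [mul_inv_eq_iff_eq_mul] at h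
        rw [← h]
      
    rcases hd : π p with j | j
    · apply hker2 (.a ((j.val : ZMod (2 * m))))
      rw [map_mul, map_inv, hd, fπ]
      show r j * (r (dcast m _))⁻¹ = 1
      rw [dcast_natCast_val, mul_inv_cancel]
    · apply hker2 (.xa ((j.val : ZMod (2 * m))))
      rw [map_mul, map_inv, hd, fπ]
      show sr j * (sr (dcast m _))⁻¹ = 1
      rw [dcast_natCast_val, mul_inv_cancel]
  haveI : Fintype P := Fintype.ofEquiv _ φ.symm.toEquiv
  have hcard : Fintype.card (QuaternionGroup m) = Fintype.card P :=
    Fintype.card_congr φ.symm.toEquiv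
  have fbij : Function.Bijective f :=
    (Fintype.bijective_iff_surjective_and_card f).2 ⟨fsurj, hcard⟩
  let F := MulEquiv.ofBijective f fbij
  have hF : ∀ q, F q = f q := fun _ => rfl
  refine ⟨F.symm, ?_, ?_⟩
  · intro z
    rw [MulEquiv.symm_apply_eq, hF, fι]
  · intro p
    conv_rhs => rw [← F.apply_symm_apply p]
    rw [hF, fπ]

end UCE


/-- For `n ≥ 3` there is, up to isomorphism of extensions, exactly one central extension
`1 → C₂ → P → D_{2^{n-1}} → 1` whose middle group `P` is isomorphic to the generalised
quaternion group `Q_{2^n}` of order `2^n` (realised as `QuaternionGroup (2^(n-2))`). -/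
theorem unique_central_extension_generalised_quaternion (n : ℕ) (hn : 3 ≤ n) :
    (∃ E : CentralExtByC2OfDihedral n,
        Nonempty (E.P ≃* QuaternionGroup (2 ^ (n - 2)))) ∧
    (∀ E E' : CentralExtByC2OfDihedral n,
        Nonempty (E.P ≃* QuaternionGroup (2 ^ (n - 2))) →
        Nonempty (E'.P ≃* QuaternionGroup (2 ^ (n - 2))) →
        E.IsIsoTo E') := by
  have hmk : 2 ^ (n - 2) = 2 * 2 ^ (n - 3) := by
    rw [(by omega : n - 2 = n - 3 + 1), pow_succ, mul_comm]
  have hk : 0 < 2 ^ (n - 3) := Nat.pow_pos (by norm_num)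
  have hm0 : 0 < 2 ^ (n - 2) := Nat.pow_pos (by norm_num)
  constructor
  · exact ⟨⟨QuaternionGroup (2 ^ (n - 2)), UCE.iota0 _, UCE.pi0 _,
      UCE.iota0_injective _ hm0, UCE.pi0_surjective _ hm0,
      UCE.iota0_central _, UCE.pi0_ker _ hm0⟩, ⟨MulEquiv.refl _⟩⟩
  · rintro E E' ⟨φ⟩ ⟨φ'⟩
    obtain ⟨e, he1, he2⟩ := UCE.key (2 ^ (n - 2)) (2 ^ (n - 3)) hmk hk
      E.ι E.π E.ι_injective E.π_surjective E.central E.exact φ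
    obtain ⟨e', he1', he2'⟩ := UCE.key (2 ^ (n - 2)) (2 ^ (n - 3)) hmk hk
      E'.ι E'.π E'.ι_injective E'.π_surjective E'.central E'.exact φ'
    refine ⟨e.trans e'.symm, ?_, ?_⟩
    · intro z
      show e'.symm (e (E.ι z)) = E'.ι z
      rw [he1, MulEquiv.symm_apply_eq, he1']
    · intro p
      show E'.π (e'.symm (e p)) = E.π p
      have h := he2' (e'.symm (e p))
      rw [MulEquiv.apply_symm_apply] at h
      rw [← h, he2]
end

section
/- Every group P admitting a central extension 1 → C₂ → P → D_{2^{n-1}} → 1 (n ≥ 3) has a presentation of the form ⟨r, s, t | rt=tr, st=ts, t²=1, r²=t^a, s²=t^b, (rs)^{2^{n-2}}=t^c⟩ for some a, b, c ∈ {0,1}, where t generates the central C₂ and r, s map to the two standard reflection generators of D_{2^{n-1}}. -/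
section Alg
variable {G : Type*} [Group G] (r s t : G) (A B C N : ℕ)

theorem alg_surj (hN : 1 ≤ N)
    (ht : t ^ 2 = 1) (htr : t * r = r * t) (hts : t * s = s * t)
    (hr : r ^ 2 = t ^ A) (hs : s ^ 2 = t ^ B) (hx : (r * s) ^ N = t ^ C)
    (hgen : Subgroup.closure {r, s, t} = ⊤) :
    Function.Surjective (fun p : Fin 2 × Fin N × Fin 2 =>
      t ^ (p.1 : ℕ) * (r * s) ^ (p.2.1 : ℕ) * s ^ (p.2.2 : ℕ)) := by
  set x := r * s with hxdef
  have ctr : Commute t r := htr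
  have cts : Commute t s := hts
  have ctx : Commute t x := ctr.mul_right cts
  have tpow2 : ∀ k : ℕ, t ^ (2 * k) = 1 := fun k => by rw [pow_mul, ht, one_pow]
  have tred : ∀ k : ℕ, t ^ k = t ^ (k % 2) := by
    intro k
    conv_lhs => rw [← Nat.div_add_mod k 2, pow_add, tpow2, one_mul]
  -- move lemmas
  have M : ∀ (u : G), Commute t u → ∀ (k : ℕ) (w : G), u * (t ^ k * w) = t ^ k * (u * w) := by
    intro u hu k w
    rw [← mul_assoc, (hu.symm.pow_right k).eq, mul_assoc]
  have M' : ∀ (u : G), Commute t u → ∀ (k : ℕ), u * t ^ k = t ^ k * u := fun u hu k =>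
    (hu.symm.pow_right k).eq
  have TT : ∀ (k l : ℕ) (w : G), t ^ k * (t ^ l * w) = t ^ (k + l) * w := by
    intro k l w; rw [← mul_assoc, ← pow_add]
  -- key identities
  have hre : t ^ B * (x * s) = r := by
    rw [hxdef, mul_assoc r, ← pow_two, hs, M' r ctr B, TT, ← two_mul, tpow2, one_mul]
  have SS : ∀ w : G, s * (s * w) = t ^ B * w := by
    intro w; rw [← mul_assoc, ← pow_two, hs]
  have RR : ∀ w : G, r * (r * w) = t ^ A * w := by
    intro w; rw [← mul_assoc, ← pow_two, hr]
  have hsx : ∀ w : G, s * (x * w) = t ^ (A + B) * (x⁻¹ * (s * w)) := by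
    intro w
    have h1 : x * (s * (x * w)) = t ^ (A + B) * (s * w) := by
      conv_lhs => rw [hxdef, mul_assoc r s (s * (r * s * w)), SS (r * s * w),
        M r ctr B (r * s * w), mul_assoc r s w, RR (s * w), TT]
      rw [Nat.add_comm B A]
    calc s * (x * w) = x⁻¹ * (x * (s * (x * w))) := by group
      _ = x⁻¹ * (t ^ (A + B) * (s * w)) := by rw [h1]
      _ = t ^ (A + B) * (x⁻¹ * (s * w)) := M x⁻¹ ctx.inv_right _ _
  have hxinv : x⁻¹ = t ^ C * x ^ (N - 1) := by
    rw [inv_eq_iff_mul_eq_one, M x ctx (C) (x ^ (N-1)), ← pow_succ', Nat.sub_add_cancel hN,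
      hx, ← pow_add, ← two_mul, tpow2]
  -- step identities
  have cxm : ∀ m : ℕ, Commute t (x ^ m) := fun m => ctx.pow_right m
  have csj : ∀ j : ℕ, Commute t (s ^ j) := fun j => cts.pow_right j
  -- the finite parametrisation
  set f : Fin 2 × Fin N × Fin 2 → G := fun p =>
    t ^ (p.1 : ℕ) * x ^ (p.2.1 : ℕ) * s ^ (p.2.2 : ℕ) with hfdef
  set S : Set G := Set.range f with hSdef
  have hSfin : S.Finite := Set.finite_range f
  -- reduction: every t^i x^m s^j with j ≤ 1 lies in S
  have red : ∀ i m j : ℕ, j ≤ 1 → t ^ i * (x ^ m * s ^ j) ∈ S := by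
    intro i m j hj
    have hxm : x ^ m = t ^ (C * (m / N)) * x ^ (m % N) := by
      conv_lhs => rw [← Nat.div_add_mod m N, pow_add, pow_mul, hx, ← pow_mul]
    refine ⟨(⟨(i + C * (m / N)) % 2, Nat.mod_lt _ (by norm_num)⟩,
      ⟨m % N, Nat.mod_lt _ (by omega)⟩, ⟨j, by omega⟩), ?_⟩
    simp only [hfdef]
    rw [mul_assoc, ← tred, ← TT, ← mul_assoc (t ^ (C * (m / N))), ← hxm]
  have h1S : (1 : G) ∈ S := by
    have := red 0 0 0 (by norm_num)
    simpa using this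
  -- S is stable under right multiplication
  have stepT : ∀ i m j : ℕ, j ≤ 1 → (t ^ i * (x ^ m * s ^ j)) * t ∈ S := by
    intro i m j hj
    have e : (t ^ i * (x ^ m * s ^ j)) * t = t ^ (i + 1) * (x ^ m * s ^ j) := by
      rw [mul_assoc, ((cxm m).mul_right (csj j)).symm.eq, ← mul_assoc, ← pow_succ]
    rw [e]; exact red _ _ _ hj
  have stepS : ∀ i m j : ℕ, j ≤ 1 → (t ^ i * (x ^ m * s ^ j)) * s ∈ S := by
    intro i m j hj
    interval_cases j
    · have e : (t ^ i * (x ^ m * s ^ 0)) * s = t ^ i * (x ^ m * s ^ 1) := by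
        rw [pow_zero, mul_one, pow_one, mul_assoc]
      rw [e]; exact red _ _ _ (by norm_num)
    · have e : (t ^ i * (x ^ m * s ^ 1)) * s = t ^ (i + B) * (x ^ m * s ^ 0) := by
        rw [pow_zero, mul_one, pow_one, mul_assoc, mul_assoc, ← pow_two, hs,
          M' (x ^ m) (cxm m) B, TT]
      rw [e]; exact red _ _ _ (by norm_num)
  have stepR : ∀ i m j : ℕ, j ≤ 1 → (t ^ i * (x ^ m * s ^ j)) * r ∈ S := by
    intro i m j hj
    interval_cases j
    · have e : (t ^ i * (x ^ m * s ^ 0)) * r = t ^ (i + B) * (x ^ (m + 1) * s ^ 1) := by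
        rw [pow_zero, mul_one, pow_one, ← hre, mul_assoc, M (x ^ m) (cxm m) B (x * s),
          TT, ← mul_assoc (x ^ m) x s, ← pow_succ]
      rw [e]; exact red _ _ _ (by norm_num)
    · have e : (t ^ i * (x ^ m * s ^ 1)) * r
          = t ^ (i + (B + (A + B) + C + B)) * (x ^ (m + (N - 1)) * s ^ 0) := by
        rw [pow_zero, mul_one, pow_one, ← hre, mul_assoc, mul_assoc, M s cts B (x * s),
          hsx s, ← pow_two, hs, hxinv, mul_assoc (t ^ C), M' (x ^ (N - 1)) (cxm (N - 1)) B,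
          TT, TT, TT, M (x ^ m) (cxm m), TT, ← pow_add]
      rw [e]; exact red _ _ _ (by norm_num)
  -- closure induction
  have hQ : ∀ g : G, ∀ p ∈ S, p * g ∈ S := by
    intro g
    have hg : g ∈ Subgroup.closure {r, s, t} := by rw [hgen]; trivial
    induction hg using Subgroup.closure_induction with
    | mem y hy =>
      intro p hp
      obtain ⟨⟨i, m, j⟩, rfl⟩ := hp
      have hp' : f (i, m, j) = t ^ (i : ℕ) * ((x : G) ^ (m : ℕ) * s ^ (j : ℕ)) := by
        simp only [hfdef]; rw [mul_assoc]
      rw [hp']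
      rcases hy with rfl | rfl | rfl
      · exact stepR _ _ _ (by omega)
      · exact stepS _ _ _ (by omega)
      · exact stepT _ _ _ (by omega)
    | one => intro p hp; simpa using hp
    | mul y z hy hz ihy ihz =>
      intro p hp
      rw [← mul_assoc]
      exact ihz _ (ihy _ hp)
    | inv y hy ihy =>
      intro p hp
      have hmaps : Set.MapsTo (· * y) S S := fun q hq => ihy q hq
      have hbij := (hSfin.injOn_iff_bijOn_of_mapsTo hmaps).mp
        ((mul_left_injective y).injOn)
      obtain ⟨q, hq, hqy⟩ := hbij.surjOn hp
      have : p * y⁻¹ = q := by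
        simp only at hqy
        rw [← hqy, mul_assoc, mul_inv_cancel, mul_one]
      rw [this]; exact hq
  -- conclude
  intro g
  have : (1 : G) * g ∈ S := hQ g 1 h1S
  rw [one_mul] at this
  obtain ⟨p, hp⟩ := this
  exact ⟨p, hp⟩

end Alg

/-- The relations `rt=tr, st=ts, t² = 1, r² = tᵃ, s² = tᵇ, (rs)^{2^{n-2}} = tᶜ` on three
generators `r = of 0`, `s = of 1`, `t = of 2`. -/
def quotD2Rels (n : ℕ) (a b c : Fin 2) : Set (FreeGroup (Fin 3)) :=
  let r : FreeGroup (Fin 3) := FreeGroup.of 0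
  let s : FreeGroup (Fin 3) := FreeGroup.of 1
  let t : FreeGroup (Fin 3) := FreeGroup.of 2
  {r * t * r⁻¹ * t⁻¹, s * t * s⁻¹ * t⁻¹, t ^ 2,
    r ^ 2 * (t ^ (a : ℕ))⁻¹, s ^ 2 * (t ^ (b : ℕ))⁻¹,
    (r * s) ^ 2 ^ (n - 2) * (t ^ (c : ℕ))⁻¹}

/-- Every group `P` admitting a central extension `1 → C₂ → P → D_{2^{n-1}} → 1` (`n ≥ 3`,
with `D_{2^{n-1}}` realised as `DihedralGroup (2^(n-2))`) has a presentation
`⟨r, s, t ∣ rt=tr, st=ts, t²=1, r²=tᵃ, s²=tᵇ, (rs)^{2^{n-2}}=tᶜ⟩` for some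
`a, b, c ∈ {0,1}`, where `t` generates the central `C₂` and `r, s` lift the two standard
reflection generators `sr 0`, `sr 1` of the dihedral group. -/
theorem central_extension_of_dihedral_has_presentation
    (n : ℕ) (hn : 3 ≤ n) (P : Type) [Group P]
    (ι : Multiplicative (ZMod 2) →* P)
    (π : P →* DihedralGroup (2 ^ (n - 2)))
    (hι : Function.Injective ι) (hπ : Function.Surjective π)
    (hcentral : ι.range ≤ Subgroup.center P)
    (hexact : π.ker = ι.range) :
    ∃ (a b c : Fin 2) (e : PresentedGroup (quotD2Rels n a b c) ≃* P),
      π (e (PresentedGroup.of 0)) = DihedralGroup.sr 0 ∧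
      π (e (PresentedGroup.of 1)) = DihedralGroup.sr 1 ∧
      e (PresentedGroup.of 2) = ι (Multiplicative.ofAdd (1 : ZMod 2)) := by
  have hN : 1 ≤ 2 ^ (n - 2) := Nat.one_le_two_pow
  haveI : NeZero (2 ^ (n - 2)) := ⟨by positivity⟩
  -- lifts
  obtain ⟨rP, hrP⟩ := hπ (DihedralGroup.sr 0)
  obtain ⟨sP, hsP⟩ := hπ (DihedralGroup.sr 1)
  set tP : P := ι (Multiplicative.ofAdd (1 : ZMod 2)) with htPdef
  -- every element of the range of ι is a power of tP
  have hιpow : ∀ z : Multiplicative (ZMod 2), ι z = tP ^ (z.toAdd.val) := by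
    intro z
    rw [htPdef, ← map_pow, ← ofAdd_nsmul, nsmul_eq_mul, mul_one]
    congr 1
    exact congrArg Multiplicative.ofAdd (ZMod.natCast_rightInverse z.toAdd).symm
  have htP2 : tP ^ 2 = 1 := by
    rw [htPdef, ← map_pow, show (Multiplicative.ofAdd (1 : ZMod 2)) ^ 2 = 1 by decide,
      map_one]
  have htPc : ∀ p : P, p * tP = tP * p := by
    intro p
    exact Subgroup.mem_center_iff.mp
      (hcentral ⟨Multiplicative.ofAdd (1 : ZMod 2), rfl⟩) p
  -- elements of the kernel
  have hker : ∀ p : P, π p = 1 → ∃ k : Fin 2, p = tP ^ (k : ℕ) := by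
    intro p hp
    have : p ∈ ι.range := by rw [← hexact]; exact MonoidHom.mem_ker.mpr hp
    obtain ⟨z, rfl⟩ := this
    exact ⟨⟨z.toAdd.val, ZMod.val_lt _⟩, hιpow z⟩
  -- definition of a b c
  obtain ⟨a, ha⟩ := hker (rP ^ 2) (by rw [map_pow, hrP, pow_two, DihedralGroup.sr_mul_self])
  obtain ⟨b, hb⟩ := hker (sP ^ 2) (by rw [map_pow, hsP, pow_two, DihedralGroup.sr_mul_self])
  obtain ⟨c, hc⟩ := hker ((rP * sP) ^ 2 ^ (n - 2)) (by
    rw [map_pow, map_mul, hrP, hsP, DihedralGroup.sr_mul_sr, sub_zero,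
      DihedralGroup.r_one_pow_n])
  refine ⟨a, b, c, ?_⟩
  -- the map to P
  set F : Fin 3 → P := ![rP, sP, tP] with hFdef
  have hF0 : F 0 = rP := rfl
  have hF1 : F 1 = sP := rfl
  have hF2 : F 2 = tP := rfl
  have hrels : ∀ w ∈ quotD2Rels n a b c, FreeGroup.lift F w = 1 := by
    intro w hw
    simp only [quotD2Rels, Set.mem_insert_iff, Set.mem_singleton_iff] at hw
    rcases hw with rfl | rfl | rfl | rfl | rfl | rfl <;>
      simp only [map_mul, map_pow, map_inv, FreeGroup.lift_apply_of, hF0, hF1, hF2]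
    · rw [htPc rP]; group
    · rw [htPc sP]; group
    · exact htP2
    · rw [← ha]; group
    · rw [← hb]; group
    · rw [← hc]; group
  set G := PresentedGroup (quotD2Rels n a b c) with hGdef
  set φ : G →* P := PresentedGroup.toGroup hrels with hφdef
  have hφ0 : φ (PresentedGroup.of 0) = rP := PresentedGroup.toGroup.of hrels
  have hφ1 : φ (PresentedGroup.of 1) = sP := PresentedGroup.toGroup.of hrels
  have hφ2 : φ (PresentedGroup.of 2) = tP := PresentedGroup.toGroup.of hrels
  -- relations inside G
  have key : ∀ w ∈ quotD2Rels n a b c, PresentedGroup.mk (quotD2Rels n a b c) w = 1 :=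
    fun w hw => (QuotientGroup.eq_one_iff _).mpr (Subgroup.subset_normalClosure hw)
  set rG : G := PresentedGroup.of 0 with hrGdef
  set sG : G := PresentedGroup.of 1 with hsGdef
  set tG : G := PresentedGroup.of 2 with htGdef
  have hmk : ∀ w (hw : w ∈ quotD2Rels n a b c),
      (FreeGroup.lift (fun i : Fin 3 => (PresentedGroup.of i : G))) w = 1 := by
    intro w hw
    have h1 := key w hw
    have h2 : (FreeGroup.lift (fun i : Fin 3 => (PresentedGroup.of i : G))) w
        = PresentedGroup.mk (quotD2Rels n a b c) w := by
      exact (FreeGroup.lift_unique (PresentedGroup.mk (quotD2Rels n a b c))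
        (fun x => rfl)).symm
    rw [h2, h1]
  have hrel : ∀ w ∈ quotD2Rels n a b c, ∀ v : FreeGroup (Fin 3),
      True := fun _ _ _ => trivial
  have grt : rG * tG * rG⁻¹ * tG⁻¹ = 1 := by
    have := hmk _ (show _ ∈ quotD2Rels n a b c by left; rfl)
    simpa [map_mul, map_inv, FreeGroup.lift_apply_of] using this
  have gst : sG * tG * sG⁻¹ * tG⁻¹ = 1 := by
    have := hmk _ (show _ ∈ quotD2Rels n a b c by right; left; rfl)
    simpa [map_mul, map_inv, FreeGroup.lift_apply_of] using this
  have gt2 : tG ^ 2 = 1 := by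
    have := hmk _ (show _ ∈ quotD2Rels n a b c by right; right; left; rfl)
    simpa [map_pow, FreeGroup.lift_apply_of] using this
  have gr2 : rG ^ 2 = tG ^ (a : ℕ) := by
    have := hmk _ (show _ ∈ quotD2Rels n a b c by right; right; right; left; rfl)
    simp only [map_mul, map_pow, map_inv, FreeGroup.lift_apply_of] at this
    rwa [mul_inv_eq_one] at this
  have gs2 : sG ^ 2 = tG ^ (b : ℕ) := by
    have := hmk _ (show _ ∈ quotD2Rels n a b c by right; right; right; right; left; rfl)
    simp only [map_mul, map_pow, map_inv, FreeGroup.lift_apply_of] at this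
    rwa [mul_inv_eq_one] at this
  have gx : (rG * sG) ^ 2 ^ (n - 2) = tG ^ (c : ℕ) := by
    have := hmk _ (show _ ∈ quotD2Rels n a b c by
      right; right; right; right; right; rfl)
    simp only [map_mul, map_pow, map_inv, FreeGroup.lift_apply_of] at this
    rwa [mul_inv_eq_one] at this
  have gtr : tG * rG = rG * tG := by
    rw [mul_inv_eq_one, mul_inv_eq_iff_eq_mul] at grt
    exact grt.symm
  have gts : tG * sG = sG * tG := by
    rw [mul_inv_eq_one, mul_inv_eq_iff_eq_mul] at gst
    exact gst.symm
  -- generators generate G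
  have hgenG : Subgroup.closure ({rG, sG, tG} : Set G) = ⊤ := by
    have hrange : Set.range (PresentedGroup.of : Fin 3 → G) = {rG, sG, tG} := by
      ext y
      constructor
      · rintro ⟨i, rfl⟩
        fin_cases i
        · left; rfl
        · right; left; rfl
        · right; right; rfl
      · rintro (rfl | rfl | rfl)
        exacts [⟨0, rfl⟩, ⟨1, rfl⟩, ⟨2, rfl⟩]
    rw [← hrange, PresentedGroup.closure_range_of]
  -- G is finite with at most 2^n elements
  have hGsurj := alg_surj rG sG tG (a : ℕ) (b : ℕ) (c : ℕ) (2 ^ (n - 2)) hN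
    gt2 gtr gts gr2 gs2 gx hgenG
  haveI : Finite G := Finite.of_surjective _ hGsurj
  have hGle : Nat.card G ≤ 2 * 2 ^ (n - 2) * 2 := by
    have h1 := Nat.card_le_card_of_surjective _ hGsurj
    have h2 : Nat.card (Fin 2 × Fin (2 ^ (n - 2)) × Fin 2) = 2 * 2 ^ (n - 2) * 2 := by
      simp [Nat.card_eq_fintype_card, mul_assoc]
    omega
  -- P has exactly 2^n elements
  have hPcard : Nat.card P = 2 * 2 ^ (n - 2) * 2 := by
    have e1 := QuotientGroup.quotientKerEquivOfSurjective π hπ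
    have h2 : Nat.card (P ⧸ π.ker) = 2 * 2 ^ (n - 2) := by
      rw [Nat.card_congr e1.toEquiv, DihedralGroup.nat_card]
    have h3 : Nat.card π.ker = 2 := by
      rw [hexact, ← Nat.card_congr (MonoidHom.ofInjective hι).toEquiv]
      simp [Nat.card_eq_fintype_card]
    rw [Subgroup.card_eq_card_quotient_mul_card_subgroup π.ker, h2, h3]
  -- the generators generate P
  have hgenP : Subgroup.closure ({rP, sP, tP} : Set P) = ⊤ := by
    set H := Subgroup.closure ({rP, sP, tP} : Set P) with hHdef
    have hrH : rP ∈ H := Subgroup.subset_closure (by left; rfl)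
    have hsH : sP ∈ H := Subgroup.subset_closure (by right; left; rfl)
    have htH : tP ∈ H := Subgroup.subset_closure (by right; right; rfl)
    have hD : ∀ d : DihedralGroup (2 ^ (n - 2)), ∃ q ∈ H, π q = d := by
      intro d
      have hpow : ∀ k : ℕ, π ((rP * sP) ^ k) = DihedralGroup.r (k : ZMod (2 ^ (n - 2))) := by
        intro k
        rw [map_pow, map_mul, hrP, hsP, DihedralGroup.sr_mul_sr, sub_zero,
          DihedralGroup.r_one_pow]
      cases d with
      | r i =>
        refine ⟨(rP * sP) ^ i.val, pow_mem (mul_mem hrH hsH) _, ?_⟩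
        rw [hpow, ZMod.natCast_rightInverse i]
      | sr i =>
        refine ⟨(rP * sP) ^ (-i).val * rP, mul_mem (pow_mem (mul_mem hrH hsH) _) hrH, ?_⟩
        rw [map_mul, hpow, ZMod.natCast_rightInverse (-i), hrP,
          DihedralGroup.r_mul_sr, zero_sub, neg_neg]
    rw [Subgroup.eq_top_iff']
    intro p
    obtain ⟨q, hq, hqp⟩ := hD (π p)
    have h1 : π (p * q⁻¹) = 1 := by rw [map_mul, map_inv, hqp, mul_inv_cancel]
    obtain ⟨k, hk⟩ := hker _ h1
    have : p = tP ^ (k : ℕ) * q := by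
      rw [← hk, inv_mul_cancel_right]
    rw [this]
    exact mul_mem (pow_mem htH _) hq
  -- φ is surjective
  have hφsurj : Function.Surjective φ := by
    rw [← MonoidHom.range_eq_top]
    apply top_unique
    rw [← hgenP]
    rw [Subgroup.closure_le]
    rintro y (rfl | rfl | rfl)
    exacts [⟨_, hφ0⟩, ⟨_, hφ1⟩, ⟨_, hφ2⟩]
  -- φ is bijective
  have hPle : Nat.card P ≤ Nat.card G := Nat.card_le_card_of_surjective _ hφsurj
  have hφbij : Function.Bijective φ :=
    (Nat.bijective_iff_surjective_and_card φ).mpr ⟨hφsurj, by omega⟩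
  refine ⟨MulEquiv.ofBijective φ hφbij, ?_, ?_, ?_⟩
  · rw [MulEquiv.ofBijective_apply, hφ0, hrP]
  · rw [MulEquiv.ofBijective_apply, hφ1, hsP]
  · rw [MulEquiv.ofBijective_apply, hφ2]
end

section
/- Let k be a field of characteristic p > 0, G a finite group, Q ≤ G a subgroup, Z a subgroup of Z(G) ∩ Q, and write Ḡ = G/Z, Q̄ = Q/Z. Then Sc(G, Q) ⊗_{kG} kḠ ≅ Sc(Ḡ, Q̄) as right kḠ-modules, where Sc denotes the Scott module. -/
open scoped TensorProduct

/-- `W` is a Scott submodule `Sc(G, Q)` of the permutation module `k[G/Q] = k_Q↑^G`: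
an indecomposable `G`-invariant direct summand whose top contains the trivial module. -/
def IsScottSubmodule (k : Type) [Field k] {G : Type} [Group G] (Q : Subgroup G)
    (W : Submodule k ((G ⧸ Q) →₀ k)) : Prop :=
  (∀ g : G, W.map (Finsupp.lmapDomain k k (fun x : G ⧸ Q => g • x)) ≤ W) ∧
  (∃ C : Submodule k ((G ⧸ Q) →₀ k),
      (∀ g : G, C.map (Finsupp.lmapDomain k k (fun x : G ⧸ Q => g • x)) ≤ C) ∧ IsCompl W C) ∧
  W ≠ ⊥ ∧
  (∀ A B : Submodule k ((G ⧸ Q) →₀ k), A ≤ W → B ≤ W →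
      (∀ g : G, A.map (Finsupp.lmapDomain k k (fun x : G ⧸ Q => g • x)) ≤ A) →
      (∀ g : G, B.map (Finsupp.lmapDomain k k (fun x : G ⧸ Q => g • x)) ≤ B) →
      Disjoint A B → A ⊔ B = W → A = ⊥ ∨ B = ⊥) ∧
  (∃ φ : ((G ⧸ Q) →₀ k) →ₗ[k] k,
      (∀ (g : G) (v : (G ⧸ Q) →₀ k), φ (Finsupp.lmapDomain k k (fun x : G ⧸ Q => g • x) v) = φ v) ∧
      ¬ W ≤ LinearMap.ker φ)

/-- The `k`-module `M`, with `G` acting through `σ`, is (a model of) the Scott module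
`Sc(G, Q)`: it is `G`-equivariantly isomorphic to a Scott submodule of `k[G/Q]`. -/
def IsScottRep (k : Type) [Field k] {G : Type} [Group G] (Q : Subgroup G)
    {M : Type} [AddCommGroup M] [Module k M] (σ : G →* (M ≃ₗ[k] M)) : Prop :=
  ∃ W : Submodule k ((G ⧸ Q) →₀ k), IsScottSubmodule k Q W ∧
    ∃ e : M ≃ₗ[k] ↥W, ∀ (g : G) (m : M),
      ((e (σ g m) : ↥W) : (G ⧸ Q) →₀ k) =
        Finsupp.lmapDomain k k (fun x : G ⧸ Q => g • x) ((e m : ↥W) : (G ⧸ Q) →₀ k)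

section Aux
variable (k : Type) [Field k] {G : Type} [Group G] (Q : Subgroup G)

/-- augmentation -/
noncomputable def aug : ((G ⧸ Q) →₀ k) →ₗ[k] k :=
  Finsupp.lsum k (fun _ => LinearMap.id)

@[simp] lemma aug_single (x : G ⧸ Q) (c : k) : aug k Q (Finsupp.single x c) = c := by
  simp [aug]

lemma aug_rho (g : G) (v : (G ⧸ Q) →₀ k) :
    aug k Q (Finsupp.lmapDomain k k (fun x : G ⧸ Q => g • x) v) = aug k Q v := by
  have : (aug k Q).comp (Finsupp.lmapDomain k k (fun x : G ⧸ Q => g • x)) = aug k Q := by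
    apply Finsupp.lhom_ext
    intro a b
    simp [Finsupp.lmapDomain_apply, Finsupp.mapDomain_single]
  exact LinearMap.congr_fun this v

lemma invariant_functional_eq (φ : ((G ⧸ Q) →₀ k) →ₗ[k] k)
    (hφ : ∀ (g : G) (v : (G ⧸ Q) →₀ k), φ (Finsupp.lmapDomain k k (fun x : G ⧸ Q => g • x) v) = φ v) :
    φ = φ (Finsupp.single (QuotientGroup.mk (1 : G) : G ⧸ Q) 1) • aug k Q := by
  set x0 : G ⧸ Q := QuotientGroup.mk (1 : G)
  apply Finsupp.lhom_ext
  intro a b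
  obtain ⟨g, rfl⟩ := QuotientGroup.mk_surjective a
  have h1 : (QuotientGroup.mk g : G ⧸ Q) = g • x0 := by
    have := MulAction.Quotient.smul_mk Q g (1 : G)
    simpa [x0] using this.symm
  have h2 : Finsupp.single (QuotientGroup.mk g : G ⧸ Q) b
      = Finsupp.lmapDomain k k (fun x : G ⧸ Q => g • x) (Finsupp.single x0 b) := by
    rw [Finsupp.lmapDomain_apply, Finsupp.mapDomain_single, ← h1]
  rw [h2, hφ]
  have : Finsupp.single x0 b = b • Finsupp.single x0 (1 : k) := by
    simp [Finsupp.smul_single]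
  rw [this, map_smul, map_smul]
  simp [aug_rho, mul_comm]

end Aux
section Aux2
variable (k : Type) [Field k] {G : Type} [Group G] (Q : Subgroup G)

local notation "V" => (G ⧸ Q) →₀ k

variable {k Q}

lemma mem_of_inv (W : Submodule k V) (hW : ∀ g : G, W.map ((Finsupp.lmapDomain k k (fun x : G ⧸ Q => g • x))) ≤ W) (g : G)
    {x : V} (hx : x ∈ W) : (Finsupp.lmapDomain k k (fun x : G ⧸ Q => g • x)) x ∈ W :=
  hW g ⟨x, hx, rfl⟩

lemma proj_equivariant {W C : Submodule k V} (hc : IsCompl W C)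
    (hW : ∀ g : G, W.map ((Finsupp.lmapDomain k k (fun x : G ⧸ Q => g • x))) ≤ W) (hC : ∀ g : G, C.map ((Finsupp.lmapDomain k k (fun x : G ⧸ Q => g • x))) ≤ C) (g : G) (v : V) :
    (W.subtype ∘ₗ Submodule.projectionOnto W C hc) ((Finsupp.lmapDomain k k (fun x : G ⧸ Q => g • x)) v)
      = (Finsupp.lmapDomain k k (fun x : G ⧸ Q => g • x)) ((W.subtype ∘ₗ Submodule.projectionOnto W C hc) v) := by
  set E := W.subtype ∘ₗ Submodule.projectionOnto W C hc with hE
  have hmemW : ∀ w : V, E w ∈ W := fun w => (Submodule.projectionOnto W C hc w).2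
  have hmemC : ∀ w : V, w - E w ∈ C := by
    intro w
    have : Submodule.projectionOnto W C hc (w - E w) = 0 := by
      rw [map_sub]
      have : Submodule.projectionOnto W C hc (E w)
          = Submodule.projectionOnto W C hc w := by
        exact Submodule.projectionOnto_apply_left hc _
      rw [this, sub_self]
    exact (Submodule.projectionOnto_apply_eq_zero_iff hc).mp this
  -- uniqueness of decomposition
  have huniq : ∀ (w c : V), w ∈ W → c ∈ C → E (w + c) = w := by
    intro w c hw hcm
    rw [map_add]
    have h1 : E w = w := by
      exact congrArg W.subtype (Submodule.projectionOnto_apply_left hc ⟨w, hw⟩)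
    have h2 : E c = 0 := by
      show ((Submodule.projectionOnto W C hc c : ↥W) : V) = 0
      rw [Submodule.projectionOnto_apply_of_mem_right hc hcm]
      rfl
    rw [h1, h2, add_zero]
  have hv : (Finsupp.lmapDomain k k (fun x : G ⧸ Q => g • x)) v = (Finsupp.lmapDomain k k (fun x : G ⧸ Q => g • x)) (E v) + (Finsupp.lmapDomain k k (fun x : G ⧸ Q => g • x)) (v - E v) := by rw [← map_add]; congr 1; abel
  rw [hv, huniq _ _ (mem_of_inv W hW g (hmemW v)) (mem_of_inv C hC g (hmemC v))]

lemma proj_eq_self {W C : Submodule k V} (hc : IsCompl W C) {w : V} (hw : w ∈ W) :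
    (W.subtype ∘ₗ Submodule.projectionOnto W C hc) w = w := by
  exact congrArg W.subtype (Submodule.projectionOnto_apply_left hc ⟨w, hw⟩)

lemma aug_proj {W C : Submodule k V} (hc : IsCompl W C)
    (hW : ∀ g : G, W.map ((Finsupp.lmapDomain k k (fun x : G ⧸ Q => g • x))) ≤ W) (hC : ∀ g : G, C.map ((Finsupp.lmapDomain k k (fun x : G ⧸ Q => g • x))) ≤ C)
    (hna : ∃ w ∈ W, aug k Q w ≠ 0) (v : V) :
    aug k Q ((W.subtype ∘ₗ Submodule.projectionOnto W C hc) v) = aug k Q v := by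
  set E := W.subtype ∘ₗ Submodule.projectionOnto W C hc with hE
  set φ := (aug k Q) ∘ₗ E with hφdef
  have hinv : ∀ (g : G) (v : V), φ ((Finsupp.lmapDomain k k (fun x : G ⧸ Q => g • x)) v) = φ v := by
    intro g v
    simp only [hφdef, LinearMap.comp_apply]
    rw [show E (((Finsupp.lmapDomain k k (fun x : G ⧸ Q => g • x))) v) = (Finsupp.lmapDomain k k (fun x : G ⧸ Q => g • x)) (E v) from proj_equivariant hc hW hC g v, aug_rho]
  have heq := invariant_functional_eq k Q φ hinv
  obtain ⟨w, hw, hwne⟩ := hna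
  set c₀ := φ (Finsupp.single (QuotientGroup.mk (1 : G) : G ⧸ Q) 1) with hc₀
  have happ : ∀ u : V, φ u = c₀ * aug k Q u := by
    intro u; rw [heq]; simp
  have hEw : E w = w := proj_eq_self hc hw
  have : aug k Q w = c₀ * aug k Q w := by
    have := happ w
    rw [hφdef] at this
    simpa [hEw] using this
  have hc1 : c₀ = 1 := by
    have h' : (c₀ - 1) * aug k Q w = 0 := by
      rw [sub_mul, one_mul, ← this, sub_self]
    rcases mul_eq_zero.mp h' with h | h
    · exact sub_eq_zero.mp h
    · exact absurd h hwne
  have := happ v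
  rw [hφdef] at this
  simpa [hc1] using this

lemma map_subtype_eq_bot {W : Submodule k V} {p : Submodule k ↥W}
    (h : p.map W.subtype = ⊥) : p = ⊥ := by
  rw [eq_bot_iff]
  intro x hx
  have hmem : (x : V) ∈ p.map W.subtype := ⟨x, hx, rfl⟩
  rw [h, Submodule.mem_bot] at hmem
  rw [Submodule.mem_bot]
  exact Subtype.ext hmem

set_option maxHeartbeats 1000000 in
lemma scott_key [Finite G] (W₁ W₂ C₁ C₂ : Submodule k V)
    (hc₁ : IsCompl W₁ C₁) (hc₂ : IsCompl W₂ C₂)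
    (hW₁ : ∀ g : G, W₁.map ((Finsupp.lmapDomain k k (fun x : G ⧸ Q => g • x))) ≤ W₁) (hC₁ : ∀ g : G, C₁.map ((Finsupp.lmapDomain k k (fun x : G ⧸ Q => g • x))) ≤ C₁)
    (hW₂ : ∀ g : G, W₂.map ((Finsupp.lmapDomain k k (fun x : G ⧸ Q => g • x))) ≤ W₂) (hC₂ : ∀ g : G, C₂.map ((Finsupp.lmapDomain k k (fun x : G ⧸ Q => g • x))) ≤ C₂)
    (hind : ∀ A B : Submodule k V, A ≤ W₁ → B ≤ W₁ →
      (∀ g : G, A.map ((Finsupp.lmapDomain k k (fun x : G ⧸ Q => g • x))) ≤ A) → (∀ g : G, B.map ((Finsupp.lmapDomain k k (fun x : G ⧸ Q => g • x))) ≤ B) →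
      Disjoint A B → A ⊔ B = W₁ → A = ⊥ ∨ B = ⊥)
    (hna₁ : ∃ w ∈ W₁, aug k Q w ≠ 0) (hna₂ : ∃ w ∈ W₂, aug k Q w ≠ 0) :
    Function.Bijective ((Submodule.projectionOnto W₁ C₁ hc₁ ∘ₗ W₂.subtype) ∘ₗ
      (Submodule.projectionOnto W₂ C₂ hc₂ ∘ₗ W₁.subtype)) := by
  set E₁ := W₁.subtype ∘ₗ Submodule.projectionOnto W₁ C₁ hc₁ with hE₁
  set E₂ := W₂.subtype ∘ₗ Submodule.projectionOnto W₂ C₂ hc₂ with hE₂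
  set γ := (Submodule.projectionOnto W₁ C₁ hc₁ ∘ₗ W₂.subtype) ∘ₗ
      (Submodule.projectionOnto W₂ C₂ hc₂ ∘ₗ W₁.subtype) with hγ
  -- coercion formula
  have hcoe : ∀ w : ↥W₁, (↑(γ w) : V) = E₁ (E₂ ↑w) := by
    intro w; simp [hγ, hE₁, hE₂]
  -- aug preserved
  have haugγ : ∀ w : ↥W₁, aug k Q (↑(γ w) : V) = aug k Q (↑w : V) := by
    intro w
    rw [hcoe, aug_proj hc₁ hW₁ hC₁ hna₁, aug_proj hc₂ hW₂ hC₂ hna₂]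
  have haugγn : ∀ (n : ℕ) (w : ↥W₁), aug k Q (↑((γ ^ n) w) : V) = aug k Q (↑w : V) := by
    intro n
    induction n with
    | zero => intro w; simp
    | succ n ih =>
      intro w
      rw [pow_succ', Module.End.mul_apply, haugγ _, ih]
  -- action on W₁
  have hres : ∀ g : G, ∀ x ∈ W₁, (Finsupp.lmapDomain k k (fun x : G ⧸ Q => g • x)) x ∈ W₁ := fun g x hx => mem_of_inv W₁ hW₁ g hx
  set act : G → (↥W₁ →ₗ[k] ↥W₁) := fun g => ((Finsupp.lmapDomain k k (fun x : G ⧸ Q => g • x))).restrict (hres g) with hact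
  have hact_coe : ∀ (g : G) (w : ↥W₁), (↑(act g w) : V) = (Finsupp.lmapDomain k k (fun x : G ⧸ Q => g • x)) ↑w := by
    intro g w; simp [hact, LinearMap.restrict_coe_apply]
  -- γ commutes with act
  have hcomm : ∀ (g : G) (w : ↥W₁), γ (act g w) = act g (γ w) := by
    intro g w
    apply Subtype.ext
    rw [hcoe, hact_coe, hact_coe, hcoe]
    rw [show E₂ (((Finsupp.lmapDomain k k (fun x : G ⧸ Q => g • x))) ↑w) = (Finsupp.lmapDomain k k (fun x : G ⧸ Q => g • x)) (E₂ ↑w) from proj_equivariant hc₂ hW₂ hC₂ g ↑w]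
    rw [show E₁ (((Finsupp.lmapDomain k k (fun x : G ⧸ Q => g • x))) (E₂ ↑w)) = (Finsupp.lmapDomain k k (fun x : G ⧸ Q => g • x)) (E₁ (E₂ ↑w)) from proj_equivariant hc₁ hW₁ hC₁ g _]
  have hcommn : ∀ (n : ℕ) (g : G) (w : ↥W₁), (γ ^ n) (act g w) = act g ((γ ^ n) w) := by
    intro n
    induction n with
    | zero => intro g w; simp
    | succ n ih =>
      intro g w
      rw [pow_succ, Module.End.mul_apply, Module.End.mul_apply, hcomm, ih]
  -- Fitting
  obtain ⟨n, hncompl, hn1⟩ :=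
    ((LinearMap.eventually_isCompl_ker_pow_range_pow (R := k) (M := ↥W₁) γ).and
      (Filter.eventually_ge_atTop 1)).exists
  set A := (LinearMap.ker (γ ^ n)).map W₁.subtype with hA
  set B := (LinearMap.range (γ ^ n)).map W₁.subtype with hB
  have hAW : A ≤ W₁ := by rw [hA]; exact Submodule.map_subtype_le _ _
  have hBW : B ≤ W₁ := by rw [hB]; exact Submodule.map_subtype_le _ _
  have hAinv : ∀ g : G, A.map ((Finsupp.lmapDomain k k (fun x : G ⧸ Q => g • x))) ≤ A := by
    intro g x hx
    rw [Submodule.mem_map] at hx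
    obtain ⟨y, hy, rfl⟩ := hx
    rw [hA, Submodule.mem_map] at hy
    obtain ⟨z, hz, rfl⟩ := hy
    rw [LinearMap.mem_ker] at hz
    rw [hA, Submodule.mem_map]
    refine ⟨act g z, ?_, (hact_coe g z).symm⟩
    rw [LinearMap.mem_ker, hcommn n g z, hz, map_zero]
  have hBinv : ∀ g : G, B.map ((Finsupp.lmapDomain k k (fun x : G ⧸ Q => g • x))) ≤ B := by
    intro g x hx
    rw [Submodule.mem_map] at hx
    obtain ⟨y, hy, rfl⟩ := hx
    rw [hB, Submodule.mem_map] at hy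
    obtain ⟨z, hz, rfl⟩ := hy
    rw [LinearMap.mem_range] at hz
    obtain ⟨z', rfl⟩ := hz
    rw [hB, Submodule.mem_map]
    exact ⟨act g ((γ ^ n) z'), LinearMap.mem_range.mpr ⟨act g z', hcommn n g z'⟩,
      (hact_coe g _).symm⟩
  have hdisj : Disjoint A B := by
    rw [disjoint_iff, hA, hB, ← Submodule.map_inf _ (Submodule.injective_subtype W₁),
      hncompl.1.eq_bot, Submodule.map_bot]
  have hsup : A ⊔ B = W₁ := by
    rw [hA, hB, ← Submodule.map_sup, hncompl.2.eq_top, Submodule.map_top,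
      Submodule.range_subtype]
  rcases hind A B hAW hBW hAinv hBinv hdisj hsup with hbot | hbot
  · -- ker (γ^n) = ⊥, so γ injective, hence bijective
    have hker : LinearMap.ker (γ ^ n) = ⊥ := map_subtype_eq_bot (hA ▸ hbot)
    have hkerγ : LinearMap.ker γ = ⊥ := by
      rw [eq_bot_iff]
      intro x hx
      rw [LinearMap.mem_ker] at hx
      have hx2 : (γ ^ n) x = 0 := by
        obtain ⟨m, rfl⟩ := Nat.exists_eq_add_of_le hn1
        rw [add_comm, pow_succ, Module.End.mul_apply, hx, map_zero]
      have := hker ▸ LinearMap.mem_ker.mpr hx2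
      exact this
    have hinj : Function.Injective γ := 
      (LinearMap.ker_eq_bot (R := k) (R₂ := k) (M := ↥W₁) (M₂ := ↥W₁) (f := γ)).mp hkerγ
    exact ⟨hinj, (@LinearMap.injective_iff_surjective k ↥W₁ _ _ _ _ γ).mp hinj⟩
  · -- range (γ^n) = ⊥ : contradiction with aug
    exfalso
    obtain ⟨w, hw, hwne⟩ := hna₁
    have hzero : (γ ^ n) ⟨w, hw⟩ = 0 := by
      have hr : LinearMap.range (γ ^ n) = ⊥ := map_subtype_eq_bot (hB ▸ hbot)
      rw [LinearMap.range_eq_bot] at hr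
      rw [hr, LinearMap.zero_apply]
    have hthis := haugγn n ⟨w, hw⟩
    rw [hzero] at hthis
    rw [ZeroMemClass.coe_zero, map_zero] at hthis
    exact hwne hthis.symm

end Aux2

section Aux3
variable {k : Type} [Field k] {G : Type} [Group G] {Q : Subgroup G}

local notation "V" => (G ⧸ Q) →₀ k

lemma aug_ne_of_scott {W : Submodule k V} (h : IsScottSubmodule k Q W) :
    ∃ w ∈ W, aug k Q w ≠ 0 := by
  obtain ⟨-, -, -, -, φ, hφ, hker⟩ := h
  rw [SetLike.not_le_iff_exists] at hker
  obtain ⟨w, hw, hwker⟩ := hker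
  refine ⟨w, hw, fun h0 => hwker ?_⟩
  rw [LinearMap.mem_ker, invariant_functional_eq k Q φ hφ]
  simp [h0]

lemma scott_unique [Finite G] {W₁ W₂ : Submodule k V}
    (h₁ : IsScottSubmodule k Q W₁) (h₂ : IsScottSubmodule k Q W₂) :
    ∃ u : ↥W₁ ≃ₗ[k] ↥W₂, ∀ (g : G) (w w' : ↥W₁),
      (↑w' : V) = (Finsupp.lmapDomain k k (fun x : G ⧸ Q => g • x)) ↑w → (↑(u w') : V) = (Finsupp.lmapDomain k k (fun x : G ⧸ Q => g • x)) ↑(u w) := by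
  have hna₁ := aug_ne_of_scott h₁
  have hna₂ := aug_ne_of_scott h₂
  obtain ⟨hW₁, ⟨C₁, hC₁, hc₁⟩, -, hind₁, -⟩ := h₁
  obtain ⟨hW₂, ⟨C₂, hC₂, hc₂⟩, -, hind₂, -⟩ := h₂
  have hbij₁ := scott_key W₁ W₂ C₁ C₂ hc₁ hc₂ hW₁ hC₁ hW₂ hC₂ hind₁ hna₁ hna₂
  have hbij₂ := scott_key W₂ W₁ C₂ C₁ hc₂ hc₁ hW₂ hC₂ hW₁ hC₁ hind₂ hna₂ hna₁
  set u₀ : ↥W₁ →ₗ[k] ↥W₂ := Submodule.projectionOnto W₂ C₂ hc₂ ∘ₗ W₁.subtype with hu₀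
  set v₀ : ↥W₂ →ₗ[k] ↥W₁ := Submodule.projectionOnto W₁ C₁ hc₁ ∘ₗ W₂.subtype with hv₀
  have hinj : Function.Injective u₀ := by
    intro a b hab
    exact hbij₁.1 (by simp only [LinearMap.comp_apply, hu₀, hv₀] at *; rw [hab])
  have hsurj : Function.Surjective u₀ := by
    intro y
    obtain ⟨x, hx⟩ := hbij₂.2 y
    exact ⟨v₀ x, by simpa [LinearMap.comp_apply, hu₀, hv₀] using hx⟩
  refine ⟨LinearEquiv.ofBijective u₀ ⟨hinj, hsurj⟩, ?_⟩
  intro g w w' hww'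
  have hcoe : ∀ x : ↥W₁, (↑(LinearEquiv.ofBijective u₀ ⟨hinj, hsurj⟩ x) : V)
      = (W₂.subtype ∘ₗ Submodule.projectionOnto W₂ C₂ hc₂) ↑x := by
    intro x; rfl
  rw [hcoe, hcoe, hww', proj_equivariant hc₂ hW₂ hC₂ g ↑w]

lemma isScottRep_unique [Finite G]
    {M₁ M₂ : Type} [AddCommGroup M₁] [Module k M₁] [AddCommGroup M₂] [Module k M₂]
    {σ₁ : G →* (M₁ ≃ₗ[k] M₁)} {σ₂ : G →* (M₂ ≃ₗ[k] M₂)}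
    (h₁ : IsScottRep k Q σ₁) (h₂ : IsScottRep k Q σ₂) :
    ∃ ψ : M₁ ≃ₗ[k] M₂, ∀ (g : G) (m : M₁), ψ (σ₁ g m) = σ₂ g (ψ m) := by
  obtain ⟨W₁, hW₁, e₁, he₁⟩ := h₁
  obtain ⟨W₂, hW₂, e₂, he₂⟩ := h₂
  obtain ⟨u, hu⟩ := scott_unique hW₁ hW₂
  refine ⟨(e₁.trans u).trans e₂.symm, ?_⟩
  intro g m
  have h1 : (↑(u (e₁ (σ₁ g m))) : V) = (Finsupp.lmapDomain k k (fun x : G ⧸ Q => g • x)) ↑(u (e₁ m)) :=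
    hu g (e₁ m) (e₁ (σ₁ g m)) (he₁ g m)
  have h2 := he₂ g (e₂.symm (u (e₁ m)))
  rw [e₂.apply_symm_apply] at h2
  apply e₂.injective
  rw [LinearEquiv.trans_apply, LinearEquiv.trans_apply, e₂.apply_symm_apply]
  exact Subtype.ext (by rw [h1, ← h2]; rfl)

end Aux3

section Aux4

variable {k : Type} [Field k] {G : Type} [Group G]

/-- central elements of `Q` act trivially on `k[G/Q]`. -/
lemma rho_central_trivial (Q : Subgroup G) {z : G}
    (hzc : z ∈ Subgroup.center G) (hzq : z ∈ Q) :
    Finsupp.lmapDomain k k (fun x : G ⧸ Q => z • x) = LinearMap.id := by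
  apply Finsupp.lhom_ext
  intro a b
  rw [Finsupp.lmapDomain_apply, Finsupp.mapDomain_single]
  obtain ⟨g, rfl⟩ := QuotientGroup.mk_surjective a
  have : z • (QuotientGroup.mk g : G ⧸ Q) = QuotientGroup.mk g := by
    rw [MulAction.Quotient.smul_mk]
    show QuotientGroup.mk (z * g) = _
    rw [QuotientGroup.eq]
    have : z * g = g * z := (Subgroup.mem_center_iff.mp hzc g).symm
    rw [this]
    simpa using hzq
  rw [this]
  rfl

variable (Q Z : Subgroup G) [Z.Normal] (hZQ : Z ≤ Q)

/-- the coset spaces `G/Q` and `(G/Z)/(Q/Z)` are equivalent. -/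
noncomputable def cosetEquiv : (G ⧸ Q) ≃ ((G ⧸ Z) ⧸ (Q.map (QuotientGroup.mk' Z))) := by
  apply Equiv.ofBijective (fun x => Quotient.liftOn' x
    (fun g => QuotientGroup.mk (QuotientGroup.mk g : G ⧸ Z)) ?_)
  constructor
  · intro a b hab
    induction a using QuotientGroup.induction_on with | H a =>
    induction b using QuotientGroup.induction_on with | H b =>
    simp only [Quotient.liftOn'_mk''] at hab
    rw [QuotientGroup.eq] at hab ⊢
    rw [show (QuotientGroup.mk a : G ⧸ Z)⁻¹ * QuotientGroup.mk b
        = QuotientGroup.mk (a⁻¹ * b) by rfl] at hab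
    obtain ⟨q, hq, hqe⟩ := hab
    have : q⁻¹ * (a⁻¹ * b) ∈ Z := by
      rw [← QuotientGroup.eq]
      exact hqe
    have h2 : a⁻¹ * b = q * (q⁻¹ * (a⁻¹ * b)) := by group
    rw [h2]
    exact Q.mul_mem hq (hZQ this)
  · intro x
    induction x using QuotientGroup.induction_on with | H a =>
    induction a using QuotientGroup.induction_on with | H g =>
    exact ⟨QuotientGroup.mk g, rfl⟩
  · intro a b hab
    rw [QuotientGroup.leftRel_apply] at hab
    rw [QuotientGroup.eq]
    exact ⟨a⁻¹ * b, hab, rfl⟩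

lemma cosetEquiv_mk (g : G) :
    cosetEquiv Q Z hZQ (QuotientGroup.mk g)
      = QuotientGroup.mk (QuotientGroup.mk g : G ⧸ Z) := rfl

lemma cosetEquiv_smul (g : G) (x : G ⧸ Q) :
    cosetEquiv Q Z hZQ (g • x) = (QuotientGroup.mk g : G ⧸ Z) • cosetEquiv Q Z hZQ x := by
  induction x using QuotientGroup.induction_on with | H a =>
  rfl

end Aux4

section Aux5

variable {k : Type} [Field k] {G : Type} [Group G]

lemma isScottRep_quotient (Q Z : Subgroup G) [Z.Normal]
    (hZc : Z ≤ Subgroup.center G) (hZQ : Z ≤ Q)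
    {M : Type} [AddCommGroup M] [Module k M] (τ : (G ⧸ Z) →* (M ≃ₗ[k] M))
    (hτ : IsScottRep k Q (τ.comp (QuotientGroup.mk' Z))) :
    IsScottRep k (Q.map (QuotientGroup.mk' Z)) τ := by
  classical
  obtain ⟨W, ⟨hW, ⟨C, hC, hc⟩, hne, hind, φ, hφ, hker⟩, e, he⟩ := hτ
  set Qb := Q.map (QuotientGroup.mk' Z) with hQb
  set ε := cosetEquiv Q Z hZQ with hε
  set L : ((G ⧸ Q) →₀ k) ≃ₗ[k] (((G ⧸ Z) ⧸ Qb) →₀ k) := Finsupp.domLCongr ε with hL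
  -- intertwining
  have hint : ∀ g : G, L.toLinearMap ∘ₗ Finsupp.lmapDomain k k (fun x : G ⧸ Q => g • x)
      = (Finsupp.lmapDomain k k (fun x : (G ⧸ Z) ⧸ Qb => (QuotientGroup.mk g : G ⧸ Z) • x))
        ∘ₗ L.toLinearMap := by
    intro g
    apply Finsupp.lhom_ext
    intro a b
    simp only [LinearMap.comp_apply, LinearEquiv.coe_coe,
      Finsupp.lmapDomain_apply, Finsupp.mapDomain_single, hL, Finsupp.domLCongr_single]
    rw [hε, cosetEquiv_smul]
  have hint' : ∀ (g : G) (v : (G ⧸ Q) →₀ k),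
      L (Finsupp.lmapDomain k k (fun x : G ⧸ Q => g • x) v)
      = Finsupp.lmapDomain k k (fun x : (G ⧸ Z) ⧸ Qb => (QuotientGroup.mk g : G ⧸ Z) • x) (L v) :=
    fun g v => LinearMap.congr_fun (hint g) v
  have hint'' : ∀ (g : G) (v : ((G ⧸ Z) ⧸ Qb) →₀ k),
      L.symm (Finsupp.lmapDomain k k (fun x : (G ⧸ Z) ⧸ Qb => (QuotientGroup.mk g : G ⧸ Z) • x) v)
      = Finsupp.lmapDomain k k (fun x : G ⧸ Q => g • x) (L.symm v) := by
    intro g v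
    apply L.injective
    rw [hint', L.apply_symm_apply, L.apply_symm_apply]
  -- map helpers
  have hmapmono : ∀ (p q : Submodule k ((G ⧸ Q) →₀ k)), p ≤ q →
      p.map L.toLinearMap ≤ q.map L.toLinearMap := fun p q h => Submodule.map_mono h
  have hmapinv : ∀ (p : Submodule k ((G ⧸ Q) →₀ k)) (hp : ∀ g : G,
      p.map (Finsupp.lmapDomain k k (fun x : G ⧸ Q => g • x)) ≤ p) (gb : G ⧸ Z),
      (p.map L.toLinearMap).map
        (Finsupp.lmapDomain k k (fun x : (G ⧸ Z) ⧸ Qb => gb • x)) ≤ p.map L.toLinearMap := by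
    intro p hp gb
    obtain ⟨g, rfl⟩ := QuotientGroup.mk_surjective gb
    rw [← Submodule.map_comp, ← hint g, Submodule.map_comp]
    exact Submodule.map_mono (hp g)
  refine ⟨W.map L.toLinearMap, ⟨?_, ⟨C.map L.toLinearMap, ?_, ?_⟩, ?_, ?_, ?_⟩, ?_⟩
  · exact hmapinv W hW
  · exact hmapinv C hC
  · exact (Submodule.orderIsoMapComap L).isCompl hc
  · intro h0
    apply hne
    rw [eq_bot_iff]
    intro x hx
    have hmem : L x ∈ W.map L.toLinearMap := ⟨x, hx, rfl⟩
    rw [h0, Submodule.mem_bot] at hmem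
    rw [Submodule.mem_bot]
    exact L.map_eq_zero_iff.mp hmem
  · -- indecomposability
    intro A B hA hB hAinv hBinv hdisj hsup
    set A' := A.map L.symm.toLinearMap with hA'
    set B' := B.map L.symm.toLinearMap with hB'
    have hms : ∀ p : Submodule k (((G ⧸ Z) ⧸ Qb) →₀ k),
        (p.map L.symm.toLinearMap).map L.toLinearMap = p := by
      intro p
      ext x
      simp only [Submodule.mem_map]
      constructor
      · rintro ⟨y, ⟨z, hz, rfl⟩, rfl⟩
        simpa using hz
      · intro hx
        exact ⟨L.symm x, ⟨x, hx, rfl⟩, by simp⟩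
    have hsm : ∀ p : Submodule k ((G ⧸ Q) →₀ k),
        (p.map L.toLinearMap).map L.symm.toLinearMap = p := by
      intro p
      ext x
      simp only [Submodule.mem_map]
      constructor
      · rintro ⟨y, ⟨z, hz, rfl⟩, rfl⟩
        simpa using hz
      · intro hx
        exact ⟨L x, ⟨x, hx, rfl⟩, by simp⟩
    have hres : A' = ⊥ ∨ B' = ⊥ := by
      apply hind A' B'
      · have := Submodule.map_mono (f := L.symm.toLinearMap) hA
        rwa [hsm] at this
      · have := Submodule.map_mono (f := L.symm.toLinearMap) hB
        rwa [hsm] at this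
      · intro g
        rw [hA', ← Submodule.map_comp]
        have hcomp : (Finsupp.lmapDomain k k (fun x : G ⧸ Q => g • x)) ∘ₗ L.symm.toLinearMap
            = L.symm.toLinearMap ∘ₗ
              Finsupp.lmapDomain k k (fun x : (G ⧸ Z) ⧸ Qb => (QuotientGroup.mk g : G ⧸ Z) • x) := by
          apply LinearMap.ext
          intro v
          exact (hint'' g v).symm
        rw [hcomp, Submodule.map_comp]
        exact Submodule.map_mono (hAinv (QuotientGroup.mk g))
      · intro g
        rw [hB', ← Submodule.map_comp]
        have hcomp : (Finsupp.lmapDomain k k (fun x : G ⧸ Q => g • x)) ∘ₗ L.symm.toLinearMap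
            = L.symm.toLinearMap ∘ₗ
              Finsupp.lmapDomain k k (fun x : (G ⧸ Z) ⧸ Qb => (QuotientGroup.mk g : G ⧸ Z) • x) := by
          apply LinearMap.ext
          intro v
          exact (hint'' g v).symm
        rw [hcomp, Submodule.map_comp]
        exact Submodule.map_mono (hBinv (QuotientGroup.mk g))
      · rw [disjoint_iff, hA', hB',
          ← Submodule.map_inf L.symm.toLinearMap
            (show Function.Injective ⇑L.symm.toLinearMap from L.symm.injective),
          hdisj.eq_bot, Submodule.map_bot]
      · rw [hA', hB', ← Submodule.map_sup, hsup, hsm]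
    rcases hres with h0 | h0
    · left
      have h0' : A.map L.symm.toLinearMap = ⊥ := h0
      rw [← hms A, h0', Submodule.map_bot]
    · right
      have h0' : B.map L.symm.toLinearMap = ⊥ := h0
      rw [← hms B, h0', Submodule.map_bot]
  · -- functional
    refine ⟨φ ∘ₗ L.symm.toLinearMap, ?_, ?_⟩
    · intro gb v
      obtain ⟨g, rfl⟩ := QuotientGroup.mk_surjective gb
      simp only [LinearMap.comp_apply, LinearEquiv.coe_coe]
      rw [hint'' g v, hφ]
    · rw [SetLike.not_le_iff_exists] at hker ⊢
      obtain ⟨w, hw, hwk⟩ := hker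
      refine ⟨L w, ⟨w, hw, rfl⟩, ?_⟩
      rw [LinearMap.mem_ker] at hwk ⊢
      simpa using hwk
  · -- equivariant isomorphism
    refine ⟨e.trans (L.submoduleMap W), ?_⟩
    intro gb m
    obtain ⟨g, rfl⟩ := QuotientGroup.mk_surjective gb
    have h1 : τ (QuotientGroup.mk g) m = (τ.comp (QuotientGroup.mk' Z)) g m := rfl
    rw [h1]
    have h2 : ∀ m' : M, ((e.trans (L.submoduleMap W)) m' : ((G ⧸ Z) ⧸ Qb) →₀ k)
        = L ((e m' : ↥W) : (G ⧸ Q) →₀ k) := by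
      intro m'
      rw [LinearEquiv.trans_apply, LinearEquiv.submoduleMap_apply]
    rw [h2, h2, he g m, hint']

end Aux5

/-- Let `k` be a field of characteristic `p > 0`, `G` a finite group, `Q ≤ G` a subgroup,
`Z ≤ Z(G) ∩ Q`, and write `Ḡ = G/Z`, `Q̄ = Q/Z`.  Then
`Sc(G, Q) ⊗_{kG} kḠ ≅ Sc(Ḡ, Q̄)` as right `kḠ`-modules.  Here the Scott module `M`, a
right `kG`-module via `m·g := σ(g⁻¹) m`, is tensored over `kG` with `kḠ` by taking the
quotient of `M ⊗_k kḠ` by the balancing relations `m·g ⊗ x - m ⊗ ḡ·x`; the conclusion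
produces, for every model `M̄` of `Sc(Ḡ, Q̄)`, a `k`-linear isomorphism which is
equivariant for the right `Ḡ`-actions. -/
theorem scott_tensor_quotient_iso
    (k : Type) [Field k] (p : ℕ) (hp : p.Prime) [CharP k p]
    (G : Type) [Group G] [Finite G] (Q Z : Subgroup G) [Z.Normal]
    (hZ : Z ≤ Subgroup.center G ⊓ Q)
    (M : Type) [AddCommGroup M] [Module k M]
    (σ : G →* (M ≃ₗ[k] M)) (hM : IsScottRep k Q σ)
    (Mbar : Type) [AddCommGroup Mbar] [Module k Mbar]
    (σbar : (G ⧸ Z) →* (Mbar ≃ₗ[k] Mbar))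
    (hMbar : IsScottRep k (Q.map (QuotientGroup.mk' Z)) σbar) :
    ∃ E : ((M ⊗[k] MonoidAlgebra k (G ⧸ Z)) ⧸
        (Submodule.span k {y : M ⊗[k] MonoidAlgebra k (G ⧸ Z) |
          ∃ (g : G) (m : M) (x : MonoidAlgebra k (G ⧸ Z)),
            y = (σ g⁻¹ m) ⊗ₜ[k] x -
              m ⊗ₜ[k] (MonoidAlgebra.single (QuotientGroup.mk g : G ⧸ Z) (1 : k) * x)}))
        ≃ₗ[k] Mbar,
      ∀ (m : M) (x : MonoidAlgebra k (G ⧸ Z)) (g : G),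
        E (Submodule.Quotient.mk
            (m ⊗ₜ[k] (x * MonoidAlgebra.single (QuotientGroup.mk g : G ⧸ Z) (1 : k)))) =
          σbar (QuotientGroup.mk g : G ⧸ Z)⁻¹
            (E (Submodule.Quotient.mk (m ⊗ₜ[k] x))) := by
  classical
  -- Z acts trivially on M
  have htriv : ∀ z ∈ Z, σ z = 1 := by
    intro z hz
    obtain ⟨W, hWs, e, he⟩ := hM
    have h1 : Finsupp.lmapDomain k k (fun x : G ⧸ Q => z • x) = LinearMap.id :=
      rho_central_trivial Q (hZ hz).1 (hZ hz).2
    have h2 : ∀ m : M, σ z m = m := by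
      intro m
      have h3 := he z m
      rw [h1] at h3
      have h4 : e (σ z m) = e m := Subtype.ext (by simpa using h3)
      exact e.injective h4
    exact DFunLike.ext _ _ h2
  set st : (G ⧸ Z) →* (M ≃ₗ[k] M) := QuotientGroup.lift Z σ htriv with hst
  have hstmk : ∀ g : G, st (QuotientGroup.mk g) = σ g := fun g => rfl
  have hcomp : st.comp (QuotientGroup.mk' Z) = σ := MonoidHom.ext fun g => rfl
  have hScott : IsScottRep k (Q.map (QuotientGroup.mk' Z)) st :=
    isScottRep_quotient Q Z (fun z hz => (hZ hz).1) (fun z hz => (hZ hz).2) st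
      (by rw [hcomp]; exact hM)
  obtain ⟨ψ, hψ⟩ := isScottRep_unique hScott hMbar
  -- composition of st
  have hstc : ∀ (u v : G ⧸ Z) (m : M), st u (st v m) = st (u * v) m := by
    intro u v m
    rw [map_mul]
    rfl
  -- the linear map A
  set Amap : MonoidAlgebra k (G ⧸ Z) →ₗ[k] (M →ₗ[k] M) :=
    Finsupp.lsum k (fun h => LinearMap.toSpanSingleton k (M →ₗ[k] M)
      (st h⁻¹ : M →ₗ[k] M)) ∘ₗ
      ((MonoidAlgebra.coeffLinearEquiv k : MonoidAlgebra k (G ⧸ Z) ≃ₗ[k] ((G ⧸ Z) →₀ k)) :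
        MonoidAlgebra k (G ⧸ Z) →ₗ[k] ((G ⧸ Z) →₀ k)) with hAmap
  have hAsingle : ∀ (h : G ⧸ Z) (c : k) (m : M),
      Amap (MonoidAlgebra.single h c) m = c • st h⁻¹ m := by
    intro h c m
    rw [hAmap, LinearMap.comp_apply, LinearEquiv.coe_coe, show (MonoidAlgebra.coeffLinearEquiv k)
      (MonoidAlgebra.single h c) = Finsupp.single h c from rfl]
    erw [Finsupp.lsum_single]
    rw [LinearMap.toSpanSingleton_apply, LinearMap.smul_apply]
    rfl
  set S : Submodule k (M ⊗[k] MonoidAlgebra k (G ⧸ Z)) :=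
    Submodule.span k {y : M ⊗[k] MonoidAlgebra k (G ⧸ Z) |
      ∃ (g : G) (m : M) (x : MonoidAlgebra k (G ⧸ Z)),
        y = (σ g⁻¹ m) ⊗ₜ[k] x -
          m ⊗ₜ[k] (MonoidAlgebra.single (QuotientGroup.mk g : G ⧸ Z) (1 : k) * x)} with hS
  set θ' : (M ⊗[k] MonoidAlgebra k (G ⧸ Z)) →ₗ[k] M := TensorProduct.lift Amap.flip with hθ'
  have hθ'tmul : ∀ (m : M) (x : MonoidAlgebra k (G ⧸ Z)), θ' (m ⊗ₜ[k] x) = Amap x m := by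
    intro m x
    rw [hθ', TensorProduct.lift.tmul]
    rfl
  -- balancing
  have hbal : ∀ (g : G) (m : M) (x : MonoidAlgebra k (G ⧸ Z)),
      Amap x (σ g⁻¹ m) = Amap (MonoidAlgebra.single (QuotientGroup.mk g : G ⧸ Z) (1 : k) * x) m := by
    intro g m x
    induction x using MonoidAlgebra.induction_linear with
    | zero => simp
    | add f f' hf hf' => rw [mul_add, map_add, map_add, LinearMap.add_apply,
        LinearMap.add_apply, hf, hf']
    | single a b =>
      rw [MonoidAlgebra.single_mul_single, one_mul]
      rw [hAsingle, hAsingle]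
      have : σ g⁻¹ m = st (QuotientGroup.mk g : G ⧸ Z)⁻¹ m := by
        rw [show (QuotientGroup.mk g : G ⧸ Z)⁻¹ = (QuotientGroup.mk g⁻¹ : G ⧸ Z) by simp,
          hstmk]
      rw [this, hstc, mul_inv_rev]
  have hSker : S ≤ LinearMap.ker θ' := by
    rw [hS, Submodule.span_le]
    rintro y ⟨g, m, x, rfl⟩
    rw [SetLike.mem_coe, LinearMap.mem_ker, map_sub, hθ'tmul, hθ'tmul, hbal, sub_self]
  set θ : (M ⊗[k] MonoidAlgebra k (G ⧸ Z)) ⧸ S →ₗ[k] M := S.liftQ θ' hSker with hθ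
  have hθmk : ∀ t, θ (Submodule.Quotient.mk t) = θ' t := fun t => rfl
  set ι₀ : M →ₗ[k] M ⊗[k] MonoidAlgebra k (G ⧸ Z) :=
    (TensorProduct.mk k M (MonoidAlgebra k (G ⧸ Z))).flip 1 with hι₀
  set ι : M →ₗ[k] (M ⊗[k] MonoidAlgebra k (G ⧸ Z)) ⧸ S := S.mkQ ∘ₗ ι₀ with hι
  have hι_apply : ∀ m : M, ι m = Submodule.Quotient.mk (m ⊗ₜ[k] (1 : MonoidAlgebra k (G ⧸ Z))) :=
    fun m => rfl
  have hright : θ ∘ₗ ι = LinearMap.id := by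
    apply LinearMap.ext
    intro m
    rw [LinearMap.comp_apply, hι_apply, hθmk, hθ'tmul]
    rw [show (1 : MonoidAlgebra k (G ⧸ Z)) = MonoidAlgebra.single (1 : G ⧸ Z) (1 : k) from rfl]
    rw [hAsingle]
    simp
  have hkey : ∀ (m : M) (x : MonoidAlgebra k (G ⧸ Z)),
      Submodule.Quotient.mk (p := S) ((Amap x m) ⊗ₜ[k] (1 : MonoidAlgebra k (G ⧸ Z)))
        = Submodule.Quotient.mk (p := S) (m ⊗ₜ[k] x) := by
    intro m x
    induction x using MonoidAlgebra.induction_linear with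
    | zero => simp [TensorProduct.tmul_zero]
    | add f f' hf hf' => rw [map_add, LinearMap.add_apply, TensorProduct.add_tmul,
        TensorProduct.tmul_add, Submodule.Quotient.mk_add, Submodule.Quotient.mk_add, hf, hf']
    | single a b =>
      obtain ⟨g, rfl⟩ := QuotientGroup.mk_surjective a
      have hrel : (σ g⁻¹ m) ⊗ₜ[k] (1 : MonoidAlgebra k (G ⧸ Z)) -
          m ⊗ₜ[k] (MonoidAlgebra.single (QuotientGroup.mk g : G ⧸ Z) (1 : k)
            * (1 : MonoidAlgebra k (G ⧸ Z))) ∈ S := by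
        rw [hS]
        exact Submodule.subset_span ⟨g, m, 1, rfl⟩
    
      rw [mul_one] at hrel
      have heq : Submodule.Quotient.mk (p := S) ((σ g⁻¹ m) ⊗ₜ[k] (1 : MonoidAlgebra k (G ⧸ Z)))
          = Submodule.Quotient.mk (p := S)
            (m ⊗ₜ[k] (MonoidAlgebra.single (QuotientGroup.mk g : G ⧸ Z) (1 : k))) :=
        (Submodule.Quotient.eq S).mpr hrel
      rw [hAsingle]
      have h1 : st (QuotientGroup.mk g : G ⧸ Z)⁻¹ m = σ g⁻¹ m := by
        rw [show (QuotientGroup.mk g : G ⧸ Z)⁻¹ = (QuotientGroup.mk g⁻¹ : G ⧸ Z) by simp, hstmk]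
      rw [h1]
      have h2 : (b • σ g⁻¹ m) ⊗ₜ[k] (1 : MonoidAlgebra k (G ⧸ Z))
          = b • ((σ g⁻¹ m) ⊗ₜ[k] (1 : MonoidAlgebra k (G ⧸ Z))) := by
        rw [TensorProduct.smul_tmul']
      rw [h2, Submodule.Quotient.mk_smul, heq, ← Submodule.Quotient.mk_smul,
        ← TensorProduct.tmul_smul]
      congr 2
      rw [MonoidAlgebra.smul_single]
      simp
  have hleft : ι ∘ₗ θ = LinearMap.id := by
    apply Submodule.linearMap_qext
    apply TensorProduct.ext'
    intro m x
    simp only [LinearMap.comp_apply, Submodule.mkQ_apply, LinearMap.id_apply]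
    rw [hθmk, hθ'tmul, hι_apply]
    exact hkey m x
  set Eq : ((M ⊗[k] MonoidAlgebra k (G ⧸ Z)) ⧸ S) ≃ₗ[k] M :=
    LinearEquiv.ofLinear θ ι hright hleft with hEq
  have hEq_apply : ∀ t, Eq (Submodule.Quotient.mk t) = θ' t := fun t => rfl
  -- equivariance of θ
  have hequiv : ∀ (m : M) (x : MonoidAlgebra k (G ⧸ Z)) (g : G),
      Amap (x * MonoidAlgebra.single (QuotientGroup.mk g : G ⧸ Z) (1 : k)) m
        = st (QuotientGroup.mk g : G ⧸ Z)⁻¹ (Amap x m) := by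
    intro m x g
    induction x using MonoidAlgebra.induction_linear with
    | zero => simp
    | add f f' hf hf' => rw [add_mul, map_add, map_add, LinearMap.add_apply,
        LinearMap.add_apply, hf, hf', map_add]
    | single a b =>
      rw [MonoidAlgebra.single_mul_single, mul_one]
      rw [hAsingle, hAsingle, map_smul, hstc, mul_inv_rev]
  refine ⟨Eq.trans ψ, ?_⟩
  intro m x g
  rw [LinearEquiv.trans_apply, LinearEquiv.trans_apply, hEq_apply, hEq_apply,
    hθ'tmul, hθ'tmul, hequiv, hψ]
end
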